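/- Let m, k, t, ℓ be positive integers with t·ℓ < k ≤ m and k ≥ 2·ℓ·(t+1), let A ⊆ Fin m with |A| = k, and let p : Fin m → ℝ with p_j ≥ 0 for all j. Suppose that max_{T ⊆ Fin m} ( (1+t)·|T ∩ A| − p(T) ) > 0 and that max_{T ⊆ Fin m} ( (1+t)·|T ∩ A| − p(T) ) ≥ max_{T ⊆ Fin m} ( (1 + k/ℓ)·min(|T|, t·ℓ) − p(T) ). Then ∑_{j ∈ A, p_j ≤ t+1} p_j ≤ 2·k·(t+1)/t. -/

import Mathlib

open Finset

/-- The best utility achievable via the `A`-type additive component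
`T ↦ (1+t)·|T ∩ A| - p(T)`. -/
noncomputable def bestA {m : ℕ} (t : ℕ) (A : Finset (Fin m)) (p : Fin m → ℝ) : ℝ :=
  (Finset.univ : Finset (Finset (Fin m))).sup' ⟨∅, Finset.mem_univ ∅⟩
    (fun T => (1 + (t : ℝ)) * ((T ∩ A).card : ℝ) - ∑ j ∈ T, p j)

/-- The best utility achievable via the `B`-type additive components
`T ↦ (1 + k/ℓ)·min(|T|, t·ℓ) - p(T)`. -/
noncomputable def bestB {m : ℕ} (k t l : ℕ) (p : Fin m → ℝ) : ℝ :=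
  (Finset.univ : Finset (Finset (Fin m))).sup' ⟨∅, Finset.mem_univ ∅⟩
    (fun T => (1 + (k : ℝ) / (l : ℝ)) * min ((T.card : ℝ)) ((t * l : ℕ) : ℝ) - ∑ j ∈ T, p j)

/-- There is a subset of `s` of any given size `n ≤ s.card` consisting of
"cheapest" elements. -/
lemma exists_cheap {m : ℕ} (p : Fin m → ℝ) :
    ∀ (n : ℕ) (s : Finset (Fin m)), n ≤ s.card →
      ∃ T, T ⊆ s ∧ T.card = n ∧ ∀ i ∈ T, ∀ j ∈ s \ T, p i ≤ p j := by
  intro n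
  induction n with
  | zero => intro s _; exact ⟨∅, empty_subset _, rfl, by simp⟩
  | succ n ih =>
    intro s hn
    obtain ⟨T, hTs, hTc, hmin⟩ := ih s (Nat.le_of_succ_le hn)
    have hne : (s \ T).Nonempty := by
      rw [← Finset.card_pos, Finset.card_sdiff_of_subset hTs, hTc]
      omega
    obtain ⟨j₀, hj₀, hj₀min⟩ := Finset.exists_min_image (s \ T) p hne
    have hj₀T : j₀ ∉ T := (Finset.mem_sdiff.mp hj₀).2
    refine ⟨insert j₀ T, ?_, ?_, ?_⟩
    · exact Finset.insert_subset (Finset.mem_sdiff.mp hj₀).1 hTs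
    · rw [Finset.card_insert_of_notMem hj₀T, hTc]
    · intro i hi j hj
      have hj' : j ∈ s \ T :=
        Finset.mem_sdiff.mpr ⟨(Finset.mem_sdiff.mp hj).1,
          fun h => (Finset.mem_sdiff.mp hj).2 (Finset.mem_insert_of_mem h)⟩
      rcases Finset.mem_insert.mp hi with rfl | hi
      · exact hj₀min j hj'
      · exact hmin i hi j hj'

/-- The sum over a cheapest subset is at most proportionally the average. -/
lemma cheap_avg {m : ℕ} (p : Fin m → ℝ) (hp : ∀ j, 0 ≤ p j) (s T : Finset (Fin m))
    (hTs : T ⊆ s) (hmin : ∀ i ∈ T, ∀ j ∈ s \ T, p i ≤ p j) :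
    (s.card : ℝ) * ∑ j ∈ T, p j ≤ (T.card : ℝ) * ∑ j ∈ s, p j := by
  have key : ∑ i ∈ T, ∑ j ∈ s \ T, p i ≤ ∑ i ∈ T, ∑ j ∈ s \ T, p j := by
    refine Finset.sum_le_sum fun i hi => Finset.sum_le_sum fun j hj => hmin i hi j hj
  have h1 : ∑ i ∈ T, ∑ j ∈ s \ T, p i = ((s \ T).card : ℝ) * ∑ i ∈ T, p i := by
    simp only [Finset.sum_const, nsmul_eq_mul]
    rw [Finset.mul_sum]
  have h2 : ∑ i ∈ T, ∑ j ∈ s \ T, p j = (T.card : ℝ) * ∑ j ∈ s \ T, p j := by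
    simp [Finset.sum_const, nsmul_eq_mul]
  have h3 : ∑ j ∈ s \ T, p j = ∑ j ∈ s, p j - ∑ j ∈ T, p j := by
    rw [eq_sub_iff_add_eq, Finset.sum_sdiff hTs]
  have h4 : ((s \ T).card : ℝ) = (s.card : ℝ) - (T.card : ℝ) := by
    rw [Finset.card_sdiff_of_subset hTs]
    have := Finset.card_le_card hTs
    push_cast [Nat.cast_sub this]
    ring
  rw [h1, h2, h3, h4] at key
  have hT0 : (0:ℝ) ≤ ∑ j ∈ T, p j := Finset.sum_nonneg fun j _ => hp j
  nlinarith [Finset.card_le_card hTs]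

set_option maxHeartbeats 1600000 in
/-- If the `A`-type utility is positive and at least the `B`-type
utility, and `k ≥ 2ℓ(t+1)`, then the total price of the items of `A` priced at most
`t + 1` (i.e. the revenue of an `A`-type purchase) is at most `2k(t+1)/t`. -/
theorem a_type_revenue_bound
    (m k t l : ℕ) (hm : 0 < m) (hk : 0 < k) (ht : 0 < t) (hl : 0 < l)
    (htl : t * l < k) (hkm : k ≤ m) (hk2 : 2 * l * (t + 1) ≤ k)
    (A : Finset (Fin m)) (hA : A.card = k)
    (p : Fin m → ℝ) (hp : ∀ j, 0 ≤ p j)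
    (B : Finset (Fin m)) (hB : ∀ j, j ∈ B ↔ j ∈ A ∧ p j ≤ (t : ℝ) + 1)
    (hpos : 0 < bestA t A p)
    (hge : bestB k t l p ≤ bestA t A p) :
    ∑ j ∈ B, p j ≤ 2 * (k : ℝ) * ((t : ℝ) + 1) / (t : ℝ) := by
  set S := ∑ j ∈ B, p j with hS
  set b := B.card with hb
  have hBA : B ⊆ A := fun j hj => ((hB j).mp hj).1
  have hbk : b ≤ k := hA ▸ Finset.card_le_card hBA
  have hS0 : 0 ≤ S := Finset.sum_nonneg fun j _ => hp j
  have hSb : S ≤ ((t : ℝ) + 1) * b := by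
    calc S ≤ ∑ _j ∈ B, ((t:ℝ)+1) :=
          Finset.sum_le_sum fun j hj => ((hB j).mp hj).2
      _ = ((t:ℝ)+1) * b := by rw [Finset.sum_const, nsmul_eq_mul, mul_comm]
  -- upper bound on bestA
  have hAup : bestA t A p ≤ (1 + (t:ℝ)) * b - S := by
    apply Finset.sup'_le
    intro T _
    have step1 : (1 + (t:ℝ)) * ((T ∩ A).card : ℝ) - ∑ j ∈ T, p j
        ≤ ∑ j ∈ T ∩ A, ((1 + (t:ℝ)) - p j) := by
      rw [Finset.sum_sub_distrib, Finset.sum_const, nsmul_eq_mul, mul_comm]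
      have : ∑ j ∈ T ∩ A, p j ≤ ∑ j ∈ T, p j :=
        Finset.sum_le_sum_of_subset_of_nonneg Finset.inter_subset_left
          (fun j _ _ => hp j)
      linarith
    have step2a : ∑ j ∈ T ∩ A, ((1 + (t:ℝ)) - p j)
        ≤ ∑ j ∈ T ∩ A, (if j ∈ B then (1 + (t:ℝ)) - p j else 0) := by
      refine Finset.sum_le_sum fun j hj => ?_
      by_cases hjB : j ∈ B
      · simp [hjB]
      · have hnot : ¬ p j ≤ (t:ℝ) + 1 := fun h => hjB ((hB j).mpr ⟨(Finset.mem_inter.mp hj).2, h⟩)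
        simp only [hjB, if_false]
        push_neg at hnot
        linarith
    have step2b : ∑ j ∈ T ∩ A, (if j ∈ B then (1 + (t:ℝ)) - p j else 0)
        = ∑ j ∈ (T ∩ A) ∩ B, ((1 + (t:ℝ)) - p j) :=
      Finset.sum_ite_mem _ _ _
    have step2 : ∑ j ∈ T ∩ A, ((1 + (t:ℝ)) - p j)
        ≤ ∑ j ∈ (T ∩ A) ∩ B, ((1 + (t:ℝ)) - p j) := step2b ▸ step2a
    have step3 : ∑ j ∈ (T ∩ A) ∩ B, ((1 + (t:ℝ)) - p j) ≤ ∑ j ∈ B, ((1 + (t:ℝ)) - p j) := by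
      refine Finset.sum_le_sum_of_subset_of_nonneg Finset.inter_subset_right ?_
      intro j hj _
      have := ((hB j).mp hj).2
      linarith
    have step4 : ∑ j ∈ B, ((1 + (t:ℝ)) - p j) = (1 + (t:ℝ)) * b - S := by
      rw [Finset.sum_sub_distrib, Finset.sum_const, nsmul_eq_mul, mul_comm]
    linarith
  -- lower bounds on bestB via explicit sets
  have hBlow : ∀ T : Finset (Fin m),
      (1 + (k : ℝ) / (l : ℝ)) * min ((T.card : ℝ)) ((t * l : ℕ) : ℝ) - ∑ j ∈ T, p j
        ≤ bestB k t l p := by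
    intro T
    exact Finset.le_sup'
      (f := fun T : Finset (Fin m) =>
        (1 + (k : ℝ) / (l : ℝ)) * min ((T.card : ℝ)) ((t * l : ℕ) : ℝ) - ∑ j ∈ T, p j)
      (Finset.mem_univ T)
  have ht' : (0:ℝ) < t := by exact_mod_cast ht
  have hl' : (0:ℝ) < l := by exact_mod_cast hl
  rcases Nat.eq_zero_or_pos b with hb0 | hbpos
  · have hBe : B = ∅ := Finset.card_eq_zero.mp hb0
    rw [hS, hBe]
    simp only [Finset.sum_empty]
    positivity
  -- B has more than t*l elements
  have htlb : t * l < b := by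
    by_contra hcon
    push_neg at hcon
    have hmin : min ((b : ℝ)) ((t * l : ℕ) : ℝ) = (b : ℝ) :=
      min_eq_left (by exact_mod_cast hcon)
    have h1 := hBlow B
    rw [← hb, ← hS, hmin] at h1
    have h2 : (1 + (k : ℝ) / (l : ℝ)) * b ≤ (1 + (t:ℝ)) * b := by
      have := le_trans h1 (le_trans hge hAup)
      linarith
    have hbpos' : (0:ℝ) < b := by exact_mod_cast hbpos
    have h3 : 1 + (k : ℝ) / l ≤ 1 + (t:ℝ) := le_of_mul_le_mul_right
      (by linarith [h2]) hbpos'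
    have h4 : (k : ℝ) ≤ t * l := by
      have : (k : ℝ) / l ≤ t := by linarith
      rw [div_le_iff₀ hl'] at this
      linarith
    have : (k : ℕ) ≤ t * l := by exact_mod_cast h4
    omega
  -- take the t*l cheapest items of B
  obtain ⟨T, hTB, hTc, hTmin⟩ := exists_cheap p (t * l) B (le_of_lt htlb)
  have havg : (b : ℝ) * ∑ j ∈ T, p j ≤ ((t : ℝ) * l) * S := by
    have h := cheap_avg p hp B T hTB hTmin
    rw [hTc] at h
    push_cast at h
    exact h
  have hminT : min ((T.card : ℝ)) ((t * l : ℕ) : ℝ) = ((t * l : ℕ) : ℝ) := by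
    rw [hTc, min_self]
  have hchain : (t:ℝ) * l + (k:ℝ) * t - ∑ j ∈ T, p j ≤ (1 + (t:ℝ)) * b - S := by
    have h1 := hBlow T
    rw [hminT] at h1
    have hexp : (1 + (k : ℝ) / (l : ℝ)) * ((t * l : ℕ) : ℝ)
        = (t:ℝ) * l + (k:ℝ) * t := by
      push_cast
      field_simp
    rw [hexp] at h1
    exact le_trans h1 (le_trans hge hAup)
  -- final arithmetic
  rw [le_div_iff₀ ht']
  set rb : ℝ := (b : ℝ) with hrb
  set rT : ℝ := ∑ j ∈ T, p j with hrT
  have hT0 : 0 ≤ rT := Finset.sum_nonneg fun j _ => hp j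
  have htlb' : (t:ℝ) * l < rb := by
    rw [hrb]
    exact_mod_cast htlb
  have hbk' : rb ≤ (k:ℝ) := by
    rw [hrb]
    exact_mod_cast hbk
  have hrb0 : (0:ℝ) ≤ rb := by positivity
  -- S*(b - t*l) ≤ (1+t)*b^2 - t*(l+k)*b
  have h2 : S * (rb - (t:ℝ)*l) ≤ (1 + (t:ℝ)) * rb^2 - (t:ℝ)*((l:ℝ)+(k:ℝ))*rb := by
    have hmul := mul_le_mul_of_nonneg_left hchain hrb0
    nlinarith [havg]
  have hktl : (t:ℝ) * l < (k:ℝ) := by exact_mod_cast htl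
  rcases le_or_gt ((t:ℝ) * rb) (2 * (k:ℝ)) with hcase | hcase
  · nlinarith [hSb, ht', mul_le_mul_of_nonneg_right hSb ht'.le,
      mul_le_mul_of_nonneg_left hcase (by positivity : (0:ℝ) ≤ (t:ℝ) + 1)]
  · have ht2 : (2:ℝ) < (t:ℝ) := by
      rcases lt_or_ge (2:ℝ) (t:ℝ) with h | h
      · exact h
      · nlinarith [mul_le_mul_of_nonneg_right h (by positivity : (0:ℝ) ≤ rb),
          mul_le_mul_of_nonneg_left hbk' ht'.le]
    have hE : ((t:ℝ) - 2) * (2 * (k:ℝ) * ((t:ℝ) + 1) * (rb - (t:ℝ)*l)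
          - (t:ℝ) * rb * ((1 + (t:ℝ)) * rb - (t:ℝ)*((l:ℝ)+(k:ℝ))))
        = ((t:ℝ) + 2) * ((k:ℝ) - (t:ℝ)*l) * ((t:ℝ)*rb - 2*(k:ℝ))
          + 2 * (t:ℝ)^2 * ((k:ℝ) - (t:ℝ)*l) * ((k:ℝ) - rb)
          + (1 + (t:ℝ)) * ((t:ℝ) - 2) * ((t:ℝ)*rb - 2*(k:ℝ)) * ((k:ℝ) - rb) := by
      ring
    have hR : (0:ℝ) ≤ ((t:ℝ) + 2) * ((k:ℝ) - (t:ℝ)*l) * ((t:ℝ)*rb - 2*(k:ℝ))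
          + 2 * (t:ℝ)^2 * ((k:ℝ) - (t:ℝ)*l) * ((k:ℝ) - rb)
          + (1 + (t:ℝ)) * ((t:ℝ) - 2) * ((t:ℝ)*rb - 2*(k:ℝ)) * ((k:ℝ) - rb) := by
      have a1 : (0:ℝ) ≤ ((t:ℝ) + 2) * ((k:ℝ) - (t:ℝ)*l) * ((t:ℝ)*rb - 2*(k:ℝ)) := by
        apply mul_nonneg (mul_nonneg (by linarith) (by linarith)) (by linarith)
      have a2 : (0:ℝ) ≤ 2 * (t:ℝ)^2 * ((k:ℝ) - (t:ℝ)*l) * ((k:ℝ) - rb) := by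
        apply mul_nonneg (mul_nonneg (by positivity) (by linarith)) (by linarith)
      have a3 : (0:ℝ) ≤ (1 + (t:ℝ)) * ((t:ℝ) - 2) * ((t:ℝ)*rb - 2*(k:ℝ)) * ((k:ℝ) - rb) := by
        apply mul_nonneg (mul_nonneg (mul_nonneg (by linarith) (by linarith)) (by linarith))
          (by linarith)
      linarith
    have key : (t:ℝ) * rb * ((1 + (t:ℝ)) * rb - (t:ℝ)*((l:ℝ)+(k:ℝ)))
        ≤ 2 * (k:ℝ) * ((t:ℝ) + 1) * (rb - (t:ℝ)*l) := by
      nlinarith [hE, hR, ht2]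
    nlinarith [mul_le_mul_of_nonneg_left h2 ht'.le, key, sub_pos.mpr htlb', hS0]
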